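/- For every integer r ≥ 1, every extreme point of the convex set 𝒜_r* = { (a_1,...,a_r) ∈ ℝ^r : Σ_{j=1}^r a_j = r(r+1)/2, and Σ_{j∈E} a_j ≥ |E|(|E|+1)/2 for every subset E ⊆ {1,...,r} } is a permutation of the vector (1, 2, ..., r). -/

import Mathlib

/-- `𝒜_r*` : the set of a ∈ ℝ^r with Σ a_j = r(r+1)/2 and Σ_{j∈E} a_j ≥ |E|(|E|+1)/2
for every subset E of the index set. -/
def Astar (r : ℕ) : Set (Fin r → ℝ) :=
  {a : Fin r → ℝ |
    (∑ j, a j) = (r : ℝ) * ((r : ℝ) + 1) / 2 ∧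
    ∀ E : Finset (Fin r), (E.card : ℝ) * ((E.card : ℝ) + 1) / 2 ≤ ∑ j ∈ E, a j}

open Finset

/-- `Gn k = k(k+1)/2` as a real number. -/
noncomputable def Gn (k : ℕ) : ℝ := (k : ℝ) * ((k : ℝ) + 1) / 2

lemma chain_aux {r : ℕ} {a : Fin r → ℝ} (haA : a ∈ Astar r)
    {E F : Finset (Fin r)} (hE : ∑ j ∈ E, a j = Gn E.card)
    (hF : ∑ j ∈ F, a j = Gn F.card) : E ⊆ F ∨ F ⊆ E := by
  by_contra h
  push_neg at h
  obtain ⟨h1, h2⟩ := h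
  have hcu : (E ∪ F).card + (E ∩ F).card = E.card + F.card :=
    Finset.card_union_add_card_inter E F
  have hcE : E.card < (E ∪ F).card := by
    apply Finset.card_lt_card
    refine ⟨Finset.subset_union_left, fun hs => h2 (fun x hx => hs (Finset.mem_union_right E hx))⟩
  have hcF : F.card < (E ∪ F).card := by
    apply Finset.card_lt_card
    refine ⟨Finset.subset_union_right, fun hs => h1 (fun x hx => hs (Finset.mem_union_left F hx))⟩
  have hsum : (∑ j ∈ E ∪ F, a j) + ∑ j ∈ E ∩ F, a j = (∑ j ∈ E, a j) + ∑ j ∈ F, a j :=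
    Finset.sum_union_inter
  have hU : Gn (E ∪ F).card ≤ ∑ j ∈ E ∪ F, a j := haA.2 (E ∪ F)
  have hI : Gn (E ∩ F).card ≤ ∑ j ∈ E ∩ F, a j := haA.2 (E ∩ F)
  rw [hE, hF] at hsum
  set u := (E ∪ F).card
  set i := (E ∩ F).card
  set e := E.card
  set f := F.card
  have hcu' : (u : ℝ) + i = e + f := by exact_mod_cast hcu
  have hcE' : (e : ℝ) + 1 ≤ u := by exact_mod_cast hcE
  have hcF' : (f : ℝ) + 1 ≤ u := by exact_mod_cast hcF
  simp only [Gn] at *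
  nlinarith [hU, hI, hsum, hcu', hcE', hcF']

lemma span_aux {r : ℕ} {a : Fin r → ℝ} (ha : a ∈ Set.extremePoints ℝ (Astar r))
    (d : Fin r → ℝ)
    (hd : ∀ E : Finset (Fin r), (∑ j ∈ E, a j = Gn E.card) → ∑ j ∈ E, d j = 0) :
    d = 0 := by
  classical
  obtain ⟨haA, hext⟩ := ha
  set S := Finset.univ.filter
    (fun E : Finset (Fin r) => ¬ (∑ j ∈ E, a j = Gn E.card)) with hS
  set B : ℝ := (∑ j, |d j|) + 1 with hB
  have hBpos : 0 < B := by
    have : 0 ≤ ∑ j, |d j| := Finset.sum_nonneg fun j _ => abs_nonneg _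
    linarith
  have hslack : ∀ E ∈ S, 0 < (∑ j ∈ E, a j) - Gn E.card := by
    intro E hE
    rw [hS, Finset.mem_filter] at hE
    have := haA.2 E
    have hne := hE.2
    simp only [Gn] at *
    rcases lt_or_eq_of_le this with h | h
    · linarith
    · exact absurd h.symm hne
  set δ : ℝ := if hSn : S.Nonempty then S.inf' hSn (fun E => (∑ j ∈ E, a j) - Gn E.card) else 1
    with hδdef
  have hδpos : 0 < δ := by
    rw [hδdef]
    split_ifs with hSn
    · obtain ⟨E, hE, hEeq⟩ := Finset.exists_mem_eq_inf' hSn (fun E => (∑ j ∈ E, a j) - Gn E.card)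
      rw [hEeq]; exact hslack E hE
    · norm_num
  have hδle : ∀ E ∈ S, δ ≤ (∑ j ∈ E, a j) - Gn E.card := by
    intro E hE
    rw [hδdef]
    rw [dif_pos ⟨E, hE⟩]
    exact Finset.inf'_le _ hE
  set ε : ℝ := δ / (2 * B) with hε
  have hεpos : 0 < ε := by positivity
  have hdbound : ∀ E : Finset (Fin r), |∑ j ∈ E, d j| < B := by
    intro E
    calc |∑ j ∈ E, d j| ≤ ∑ j ∈ E, |d j| := Finset.abs_sum_le_sum_abs _ _
      _ ≤ ∑ j, |d j| := Finset.sum_le_sum_of_subset_of_nonneg (Finset.subset_univ E)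
          (fun j _ _ => abs_nonneg _)
      _ < B := by rw [hB]; linarith
  have htuniv : ∑ j ∈ Finset.univ, a j = Gn (Finset.univ : Finset (Fin r)).card := by
    rw [Finset.card_univ, Fintype.card_fin]
    exact haA.1
  have hduniv : ∑ j ∈ Finset.univ, d j = 0 := hd _ htuniv
  have hmem : ∀ s : ℝ, |s| ≤ ε → a + s • d ∈ Astar r := by
    intro s hs
    constructor
    · have : ∑ j, (a + s • d) j = (∑ j, a j) + s * ∑ j, d j := by
        simp [Finset.sum_add_distrib, Finset.mul_sum]
      rw [this, hduniv, mul_zero, add_zero]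
      exact haA.1
    · intro E
      have hsumE : ∑ j ∈ E, (a + s • d) j = (∑ j ∈ E, a j) + s * ∑ j ∈ E, d j := by
        simp [Finset.sum_add_distrib, Finset.mul_sum]
      rw [hsumE]
      by_cases hE : ∑ j ∈ E, a j = Gn E.card
      · rw [hd E hE, mul_zero, add_zero, hE]
        simp [Gn]
      · have hES : E ∈ S := by rw [hS, Finset.mem_filter]; exact ⟨Finset.mem_univ E, hE⟩
        have h1 : δ ≤ (∑ j ∈ E, a j) - Gn E.card := hδle E hES
        have h2 : |s * ∑ j ∈ E, d j| ≤ δ / 2 := by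
          rw [abs_mul]
          calc |s| * |∑ j ∈ E, d j| ≤ ε * B :=
              mul_le_mul hs (le_of_lt (hdbound E)) (abs_nonneg _) (le_of_lt hεpos)
            _ = δ / 2 := by rw [hε]; field_simp
        have h3 : -(δ/2) ≤ s * ∑ j ∈ E, d j := neg_le_of_abs_le h2
        have : Gn E.card ≤ (∑ j ∈ E, a j) + s * ∑ j ∈ E, d j := by linarith
        simpa [Gn] using this
  have hmem1 : a + ε • d ∈ Astar r := hmem ε (by rw [abs_of_pos hεpos])
  have hmem2 : a + (-ε) • d ∈ Astar r := hmem (-ε) (by rw [abs_neg, abs_of_pos hεpos])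
  have hseg : a ∈ openSegment ℝ (a + ε • d) (a + (-ε) • d) := by
    refine ⟨1/2, 1/2, by norm_num, by norm_num, by norm_num, ?_⟩
    funext j
    simp only [Pi.add_apply, Pi.smul_apply, smul_eq_mul, Pi.neg_apply]
    ring
  have := hext hmem1 hmem2 hseg
  have h0 : ε • d = 0 := by
    have h := this
    have := congrArg (fun x => x - a) h
    simpa [add_sub_cancel_left] using this
  rcases smul_eq_zero.mp h0 with h | h
  · exact absurd h (ne_of_gt hεpos)
  · exact h


/-- every extreme point of 𝒜_r* is a permutation of (1, 2, ..., r). -/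
theorem stmt_8 (r : ℕ) (hr : 1 ≤ r) (a : Fin r → ℝ)
    (ha : a ∈ Set.extremePoints ℝ (Astar r)) :
    ∃ σ : Equiv.Perm (Fin r), a = fun i => ((σ i : ℕ) : ℝ) + 1 := by
  classical
  have haA : a ∈ Astar r := ha.1
  have htuniv : ∑ j ∈ Finset.univ, a j = Gn (Finset.univ : Finset (Fin r)).card := by
    rw [Finset.card_univ, Fintype.card_fin]
    exact haA.1
  -- key construction: for each i there is a tight P with i ∉ P, insert i P tight,
  -- a i = P.card + 1
  have hkey : ∀ i : Fin r, ∃ P : Finset (Fin r),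
      i ∉ P ∧ (∑ j ∈ P, a j = Gn P.card) ∧
      (∑ j ∈ insert i P, a j = Gn (insert i P).card) ∧
      a i = (P.card : ℝ) + 1 := by
    intro i
    -- minimal tight set containing i
    set Fi := Finset.univ.filter
      (fun E : Finset (Fin r) => (∑ j ∈ E, a j = Gn E.card) ∧ i ∈ E) with hFi
    have hFine : Fi.Nonempty :=
      ⟨Finset.univ, by rw [hFi, Finset.mem_filter]; exact ⟨Finset.mem_univ _, htuniv, Finset.mem_univ i⟩⟩
    obtain ⟨M, hMmem, hMmin⟩ := Finset.exists_min_image Fi Finset.card hFine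
    rw [hFi, Finset.mem_filter] at hMmem
    obtain ⟨-, hMt, hiM⟩ := hMmem
    have hMsub : ∀ F : Finset (Fin r), (∑ j ∈ F, a j = Gn F.card) → i ∈ F → M ⊆ F := by
      intro F hFt hiF
      rcases chain_aux haA hMt hFt with h | h
      · exact h
      · have hcard : M.card ≤ F.card := hMmin F (by
          rw [hFi, Finset.mem_filter]; exact ⟨Finset.mem_univ _, hFt, hiF⟩)
        rw [Finset.eq_of_subset_of_card_le h hcard]
    -- maximal tight proper subset of M
    set Qi := Finset.univ.filter
      (fun E : Finset (Fin r) => (∑ j ∈ E, a j = Gn E.card) ∧ E ⊂ M) with hQi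
    have hQine : Qi.Nonempty := by
      refine ⟨∅, ?_⟩
      rw [hQi, Finset.mem_filter]
      refine ⟨Finset.mem_univ _, by simp [Gn], Finset.empty_ssubset.mpr ⟨i, hiM⟩⟩
    obtain ⟨P, hPmem, hPmax⟩ := Finset.exists_max_image Qi Finset.card hQine
    rw [hQi, Finset.mem_filter] at hPmem
    obtain ⟨-, hPt, hPM⟩ := hPmem
    have hiP : i ∉ P := by
      intro hiP
      have : M.card ≤ P.card := hMmin P (by
        rw [hFi, Finset.mem_filter]; exact ⟨Finset.mem_univ _, hPt, hiP⟩)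
      exact absurd this (not_le_of_gt (Finset.card_lt_card hPM))
    have hcover : ∀ G : Finset (Fin r), (∑ j ∈ G, a j = Gn G.card) → G ⊆ P ∨ M ⊆ G := by
      intro G hGt
      rcases chain_aux haA hGt hMt with h | h
      · rcases eq_or_ne G M with rfl | hne
        · exact Or.inr Finset.Subset.rfl
        · have hGM : G ⊂ M := ⟨h, fun hs => hne (Finset.Subset.antisymm h hs)⟩
          rcases chain_aux haA hGt hPt with h2 | h2
          · exact Or.inl h2
          · left
            have hcard : G.card ≤ P.card := hPmax G (by
              rw [hQi, Finset.mem_filter]; exact ⟨Finset.mem_univ _, hGt, hGM⟩)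
            rw [← Finset.eq_of_subset_of_card_le h2 hcard]
      · exact Or.inr h
    -- M = insert i P
    have hMeq : M = insert i P := by
      apply Finset.Subset.antisymm
      · intro j hjM
        rw [Finset.mem_insert]
        by_contra hj
        push_neg at hj
        obtain ⟨hji, hjP⟩ := hj
        -- perturbation direction e_i - e_j vanishes on all tight sets
        set d : Fin r → ℝ := fun k => (if k = i then (1:ℝ) else 0) - (if k = j then 1 else 0)
          with hd
        have hdz : d = 0 := by
          apply span_aux ha
          intro G hGt
          have hsplit : ∑ k ∈ G, d k =
              (if i ∈ G then (1:ℝ) else 0) - (if j ∈ G then 1 else 0) := by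
            rw [hd]
            rw [Finset.sum_sub_distrib]
            congr 1 <;> simp [Finset.sum_ite_eq']
          rw [hsplit]
          rcases hcover G hGt with h | h
          · rw [if_neg (fun hc => hiP (h hc)), if_neg (fun hc => hjP (h hc)), sub_zero]
          · rw [if_pos (h hiM), if_pos (h hjM), sub_self]
        have : d i = 1 := by rw [hd]; simp [hji.symm, Ne.symm]
        rw [hdz] at this
        simp at this
      · exact Finset.insert_subset hiM hPM.1
    have hcardM : (insert i P).card = P.card + 1 := Finset.card_insert_of_notMem hiP
    have hMt' : ∑ j ∈ insert i P, a j = Gn (insert i P).card := by rw [← hMeq]; exact hMt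
    refine ⟨P, hiP, hPt, hMt', ?_⟩
    have hsum : a i + ∑ j ∈ P, a j = Gn (P.card + 1) := by
      rw [← Finset.sum_insert hiP, ← hcardM, hMt']
    rw [hPt] at hsum
    have : a i = Gn (P.card + 1) - Gn P.card := by linarith
    rw [this]
    simp only [Gn]
    push_cast
    ring
  choose P hiP hPt hMt haP using hkey
  have hcardlt : ∀ i, (P i).card < r := by
    intro i
    have h1 : (insert i (P i)).card = (P i).card + 1 := Finset.card_insert_of_notMem (hiP i)
    have h2 : (insert i (P i)).card ≤ r := by
      calc (insert i (P i)).card ≤ (Finset.univ : Finset (Fin r)).card := Finset.card_le_univ _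
        _ = r := by rw [Finset.card_univ, Fintype.card_fin]
    omega
  have hinj : Function.Injective (fun i : Fin r => (⟨(P i).card, hcardlt i⟩ : Fin r)) := by
    intro i j hij
    have hcc : (P i).card = (P j).card := by
      have := congrArg Fin.val hij
      simpa using this
    have hPP : P i = P j := by
      rcases chain_aux haA (hPt i) (hPt j) with h | h
      · exact Finset.eq_of_subset_of_card_le h (le_of_eq hcc.symm)
      · exact (Finset.eq_of_subset_of_card_le h (le_of_eq hcc)).symm
    have hcM : (insert j (P j)).card ≤ (insert i (P i)).card := by
      rw [Finset.card_insert_of_notMem (hiP i), Finset.card_insert_of_notMem (hiP j)]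
      omega
    have hMM : insert i (P i) = insert j (P j) := by
      rcases chain_aux haA (hMt i) (hMt j) with h | h
      · exact (Finset.eq_of_subset_of_card_le h hcM).symm.symm
      · exact (Finset.eq_of_subset_of_card_le h (by
          rw [Finset.card_insert_of_notMem (hiP i), Finset.card_insert_of_notMem (hiP j)]
          omega)).symm
    have hiMj : i ∈ insert j (P j) := by rw [← hMM]; exact Finset.mem_insert_self i _
    rcases Finset.mem_insert.mp hiMj with h | h
    · exact h
    · rw [← hPP] at h; exact absurd h (hiP i)
  set f : Fin r → Fin r := fun i => ⟨(P i).card, hcardlt i⟩ with hf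
  have hbij : Function.Bijective f := Finite.injective_iff_bijective.mp hinj
  refine ⟨Equiv.ofBijective f hbij, ?_⟩
  funext i
  have : ((Equiv.ofBijective f hbij) i : ℕ) = (P i).card := by
    rw [Equiv.ofBijective_apply]
  rw [this]
  exact haP i
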